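/- arXiv:1309.7724 — 3 statements merged into one kernel-verified Lean document; each statement's English description precedes it below -/
import Mathlib

section
/- For every k with k ≥ l'(x) − 1, the promoted set at level k+1 is exactly T_{k+1} = {i ∈ L_{k+1} : there exists j ∈ T_k with j << i}. -/
/-- `c` is an increasing subsequence of `(S, f)`: a list of indices, all in `S`,
strictly increasing in index and strictly increasing in value. -/
def IsIncrSubseq (S : Finset ℕ) (f : ℕ → ℝ) (c : List ℕ) : Prop :=
  (∀ a ∈ c, a ∈ S) ∧ c.Chain' (· < ·) ∧ c.Chain' (fun a b => f a < f b)

/-- `lvl S f i` is the maximum length of an increasing subsequence of `(S, f)` ending at `i`. -/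
noncomputable def lvl (S : Finset ℕ) (f : ℕ → ℝ) (i : ℕ) : ℕ :=
  sSup {m | ∃ c : List ℕ, IsIncrSubseq S f c ∧ c.getLast? = some i ∧ c.length = m}

/-- The level set `L_k = {i ∈ S : lvl S f i = k}`. -/
def levelSet (S : Finset ℕ) (f : ℕ → ℝ) (k : ℕ) : Set ℕ :=
  {i | i ∈ S ∧ lvl S f i = k}

/-- The promoted set `T_k`: indices of `S' = S ∪ {x}` whose post-insertion level is `k + 1`
and which are either the inserted index `x` or had pre-insertion level `k`. -/
def promoted (S : Finset ℕ) (f : ℕ → ℝ) (x : ℕ) (k : ℕ) : Set ℕ :=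
  {i | i ∈ insert x S ∧ lvl (insert x S) f i = k + 1 ∧ (i = x ∨ lvl S f i = k)}

section Aux

variable (S : Finset ℕ) (f : ℕ → ℝ)

/-- The defining set of `lvl`. -/
def lvlSet (i : ℕ) : Set ℕ :=
  {m | ∃ c : List ℕ, IsIncrSubseq S f c ∧ c.getLast? = some i ∧ c.length = m}

lemma nodup_of_incr {c : List ℕ} (hc : IsIncrSubseq S f c) : c.Nodup :=
  ((List.isChain_iff_pairwise.mp hc.2.1).imp fun h => Nat.ne_of_lt h)

lemma lvlSet_bdd (i : ℕ) : BddAbove (lvlSet S f i) := by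
  refine ⟨S.card, fun m hm => ?_⟩
  obtain ⟨c, hc, -, rfl⟩ := hm
  have : c.toFinset ⊆ S := fun a ha => hc.1 a (List.mem_toFinset.mp ha)
  calc c.length = c.toFinset.card := (List.toFinset_card_of_nodup (nodup_of_incr S f hc)).symm
    _ ≤ S.card := Finset.card_le_card this

lemma lvlSet_nonempty {i : ℕ} (hi : i ∈ S) : (lvlSet S f i).Nonempty :=
  ⟨1, [i], ⟨by simpa using hi, List.isChain_singleton i, List.isChain_singleton i⟩, rfl, rfl⟩

lemma lvl_mem {i : ℕ} (hi : i ∈ S) : lvl S f i ∈ lvlSet S f i :=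
  Nat.sSup_mem (lvlSet_nonempty S f hi) (lvlSet_bdd S f i)

lemma le_lvl {i m : ℕ} (hm : m ∈ lvlSet S f i) : m ≤ lvl S f i :=
  le_csSup (lvlSet_bdd S f i) hm

lemma lvl_pos {i : ℕ} (hi : i ∈ S) : 1 ≤ lvl S f i :=
  le_lvl S f (by exact ⟨[i], ⟨by simpa using hi, List.isChain_singleton i,
    List.isChain_singleton i⟩, rfl, rfl⟩)

/-- Monotonicity in `S`. -/
lemma lvl_mono {S T : Finset ℕ} (hST : S ⊆ T) (f : ℕ → ℝ) {i : ℕ} (hi : i ∈ S) :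
    lvl S f i ≤ lvl T f i := by
  obtain ⟨c, hc, hlast, hlen⟩ := lvl_mem S f hi
  exact hlen ▸ le_lvl T f ⟨c, ⟨fun a ha => hST (hc.1 a ha), hc.2⟩, hlast, rfl⟩

/-- If `j << i`, the level strictly increases. -/
lemma lvl_succ_le {i j : ℕ} (hj : j ∈ S) (hi : i ∈ S) (hji : j < i) (hf : f j < f i) :
    lvl S f j + 1 ≤ lvl S f i := by
  obtain ⟨c, hc, hlast, hlen⟩ := lvl_mem S f hj
  refine le_lvl S f ⟨c ++ [i], ⟨?_, ?_, ?_⟩, ?_, by simp [hlen]⟩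
  · intro a ha
    rcases List.mem_append.mp ha with h | h
    · exact hc.1 a h
    · simpa using (List.mem_singleton.mp h) ▸ hi
  · refine List.isChain_append.mpr ⟨hc.2.1, List.isChain_singleton i, ?_⟩
    intro a ha b hb
    simp only [List.head?_cons, Option.mem_def, Option.some.injEq] at hb
    rw [hlast] at ha
    simp only [Option.mem_def, Option.some.injEq] at ha
    subst ha; subst hb; exact hji
  · refine List.isChain_append.mpr ⟨hc.2.2, List.isChain_singleton i, ?_⟩
    intro a ha b hb
    simp only [List.head?_cons, Option.mem_def, Option.some.injEq] at hb
    rw [hlast] at ha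
    simp only [Option.mem_def, Option.some.injEq] at ha
    subst ha; subst hb; exact hf
  · rw [List.getLast?_append_of_ne_nil c (by simp)]; rfl

/-- If `lvl S f i ≥ 2`, there is `j ∈ S` with `j << i` and `lvl S f j ≥ lvl S f i - 1`. -/
lemma exists_pred {i : ℕ} (hi : i ∈ S) (h2 : 2 ≤ lvl S f i) :
    ∃ j ∈ S, j < i ∧ f j < f i ∧ lvl S f i - 1 ≤ lvl S f j := by
  obtain ⟨c, hc, hlast, hlen⟩ := lvl_mem S f hi
  -- c has length ≥ 2, split off the last element
  have hne : c ≠ [] := by rintro rfl; simp at hlast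
  have hdne : c.dropLast ≠ [] := by
    intro h
    have h0 : c.length - 1 = 0 := by rw [← List.length_dropLast, h]; rfl
    omega
  have hsplit : c = c.dropLast ++ [c.getLast hne] := (List.dropLast_append_getLast hne).symm
  set j := c.dropLast.getLast hdne with hj
  have hilast : c.getLast hne = i := by
    have := List.getLast?_eq_getLast hne
    rw [hlast] at this
    exact (Option.some.injEq _ _).mp this.symm
  have hjmem : j ∈ c := List.mem_of_mem_dropLast (List.getLast_mem hdne)
  have hjS : j ∈ S := hc.1 j hjmem
  have hdsub : c.dropLast.Sublist c := List.dropLast_sublist c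
  have hcd : IsIncrSubseq S f c.dropLast :=
    ⟨fun a ha => hc.1 a (List.mem_of_mem_dropLast ha),
     List.IsChain.sublist hc.2.1 hdsub,
     haveI : IsTrans ℕ (fun a b => f a < f b) := ⟨fun _ _ _ => lt_trans⟩
     List.IsChain.sublist hc.2.2 hdsub⟩
  have hrel : ∀ (R : ℕ → ℕ → Prop), c.Chain' R → R j i := by
    intro R hR
    rw [hsplit] at hR
    have := (List.isChain_append.mp hR).2.2
    rw [hilast] at this
    exact this j (List.getLast?_eq_getLast hdne ▸ rfl) i rfl
  have hji : j < i := hrel _ hc.2.1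
  have hfji : f j < f i := hrel _ hc.2.2
  have hlvlj : c.dropLast.length ≤ lvl S f j :=
    le_lvl S f ⟨c.dropLast, hcd, List.getLast?_eq_getLast hdne, rfl⟩
  have : c.dropLast.length = c.length - 1 := List.length_dropLast
  exact ⟨j, hjS, hji, hfji, by omega⟩

/-- Inserting a single element raises levels by at most one. -/
lemma lvl_insert_le {x : ℕ} (hx : x ∉ S) {i : ℕ} (hi : i ∈ S) :
    lvl (insert x S) f i ≤ lvl S f i + 1 := by
  obtain ⟨c, hc, hlast, hlen⟩ := lvl_mem (insert x S) f (Finset.mem_insert_of_mem hi)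
  by_cases hxc : x ∈ c
  · obtain ⟨s, t, rfl⟩ := List.append_of_mem hxc
    have hnd : (s ++ x :: t).Nodup := nodup_of_incr _ f hc
    have hsub : (s ++ t).Sublist (s ++ x :: t) :=
      List.Sublist.append_left (List.sublist_cons_self x t) s
    have hmem : ∀ a ∈ s ++ t, a ∈ S := by
      intro a ha
      have hax : a ≠ x := by
        rcases List.mem_append.mp ha with h | h
        · exact fun he => (List.disjoint_of_nodup_append hnd) h (he ▸ (List.mem_cons_self (a := x) (l := t)))
        · intro he
          subst he
          exact (List.nodup_cons.mp (List.Nodup.of_append_right hnd)).1 h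
      have := hc.1 a (hsub.mem ha)
      rcases Finset.mem_insert.mp this with h | h
      · exact absurd h hax
      · exact h
    have htne : t ≠ [] := by
      rintro rfl
      rw [List.getLast?_append_cons, List.getLast?_singleton] at hlast
      have hxi : x = i := by simpa using hlast
      exact hx (hxi ▸ hi)
    have hlast' : (s ++ t).getLast? = some i := by
      rw [List.getLast?_append_of_ne_nil s htne]
      rw [List.getLast?_append_cons] at hlast
      rwa [show x :: t = [x] ++ t from rfl,
        List.getLast?_append_of_ne_nil [x] htne] at hlast
    have hcd : IsIncrSubseq S f (s ++ t) :=
      ⟨hmem, List.IsChain.sublist hc.2.1 hsub,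
       haveI : IsTrans ℕ (fun a b => f a < f b) := ⟨fun _ _ _ => lt_trans⟩
       List.IsChain.sublist hc.2.2 hsub⟩
    have : (s ++ t).length ≤ lvl S f i := le_lvl S f ⟨s ++ t, hcd, hlast', rfl⟩
    simp only [List.length_append, List.length_cons] at hlen this
    omega
  · have : c.length ≤ lvl S f i := by
      refine le_lvl S f ⟨c, ⟨?_, hc.2⟩, hlast, rfl⟩
      intro a ha
      rcases Finset.mem_insert.mp (hc.1 a ha) with h | h
      · exact absurd (h ▸ ha) hxc
      · exact h
    omega

end Aux

/-- For every `k ≥ l'(x) - 1`, the promoted set at level `k + 1` is exactly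
`T_{k+1} = {i ∈ L_{k+1} : ∃ j ∈ T_k, j << i}`. -/
theorem stmt_4 (S : Finset ℕ) (f : ℕ → ℝ) (x : ℕ) (hx : x ∉ S) (k : ℕ)
    (hk : lvl (insert x S) f x - 1 ≤ k) :
    promoted S f x (k + 1) =
      {i | i ∈ levelSet S f (k + 1) ∧ ∃ j ∈ promoted S f x k, j < i ∧ f j < f i} := by
  have hxx : x ∈ insert x S := Finset.mem_insert_self x S
  ext i
  simp only [promoted, levelSet, Set.mem_setOf_eq]
  constructor
  · rintro ⟨hiS', hl'i, hdisj⟩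
    have hinx : i ≠ x := by
      rintro rfl
      omega
    have hiS : i ∈ S := (Finset.mem_insert.mp hiS').resolve_left hinx
    have hli : lvl S f i = k + 1 := hdisj.resolve_left hinx
    refine ⟨⟨hiS, hli⟩, ?_⟩
    -- extract predecessor j in insert x S
    obtain ⟨j, hjS', hji, hfji, hjlvl⟩ := exists_pred (insert x S) f hiS' (by omega)
    have hub : lvl (insert x S) f j + 1 ≤ lvl (insert x S) f i :=
      lvl_succ_le _ f hjS' hiS' hji hfji
    have hl'j : lvl (insert x S) f j = k + 1 := by omega
    refine ⟨j, ⟨hjS', hl'j, ?_⟩, hji, hfji⟩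
    by_cases hjx : j = x
    · exact Or.inl hjx
    · right
      have hjS : j ∈ S := (Finset.mem_insert.mp hjS').resolve_left hjx
      have h1 : lvl S f j ≤ lvl (insert x S) f j :=
        lvl_mono (Finset.subset_insert x S) f hjS
      have h2 : lvl (insert x S) f j ≤ lvl S f j + 1 := lvl_insert_le S f hx hjS
      have h3 : lvl S f j ≠ k + 1 := by
        intro he
        have := lvl_succ_le S f hjS hiS hji hfji
        omega
      omega
  · rintro ⟨⟨hiS, hli⟩, j, ⟨hjS', hl'j, hjdisj⟩, hji, hfji⟩
    have hiS' : i ∈ insert x S := Finset.mem_insert_of_mem hiS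
    have hlow : k + 2 ≤ lvl (insert x S) f i := by
      have := lvl_succ_le (insert x S) f hjS' hiS' hji hfji
      omega
    have hhigh : lvl (insert x S) f i ≤ k + 2 := by
      have := lvl_insert_le S f hx hiS
      omega
    exact ⟨hiS', by omega, Or.inr hli⟩
end

section
/- For every natural number k, the post-insertion level set satisfies L'_{k+1} = (L_{k+1} \ T_{k+1}) ∪ T_k. -/
namespace Aux

lemma nodup_of_incr {S : Finset ℕ} {f : ℕ → ℝ} {c : List ℕ} (h : IsIncrSubseq S f c) :
    c.Nodup :=
  (List.isChain_iff_pairwise.mp h.2.1).imp ne_of_lt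

lemma len_le_card {S : Finset ℕ} {f : ℕ → ℝ} {c : List ℕ} (h : IsIncrSubseq S f c) :
    c.length ≤ S.card := by
  classical
  calc c.length = c.toFinset.card := (List.toFinset_card_of_nodup (nodup_of_incr h)).symm
    _ ≤ S.card := Finset.card_le_card (fun a ha => h.1 a (List.mem_toFinset.mp ha))

lemma bdd (S : Finset ℕ) (f : ℕ → ℝ) (i : ℕ) :
    BddAbove {m | ∃ c : List ℕ, IsIncrSubseq S f c ∧ c.getLast? = some i ∧ c.length = m} :=
  ⟨S.card, fun m ⟨c, hc, _, hl⟩ => hl ▸ len_le_card hc⟩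

lemma nonempty_set {S : Finset ℕ} {f : ℕ → ℝ} {i : ℕ} (hi : i ∈ S) :
    Set.Nonempty {m | ∃ c : List ℕ, IsIncrSubseq S f c ∧ c.getLast? = some i ∧ c.length = m} :=
  ⟨1, [i], ⟨by simpa using hi, List.isChain_singleton _, List.isChain_singleton _⟩, rfl, rfl⟩

lemma lvl_mem {S : Finset ℕ} {f : ℕ → ℝ} {i : ℕ} (hi : i ∈ S) :
    ∃ c : List ℕ, IsIncrSubseq S f c ∧ c.getLast? = some i ∧ c.length = lvl S f i :=
  Nat.sSup_mem (nonempty_set hi) (bdd S f i)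

lemma lvl_mono {S S' : Finset ℕ} {f : ℕ → ℝ} {i : ℕ} (hSS : S ⊆ S') (hi : i ∈ S) :
    lvl S f i ≤ lvl S' f i := by
  apply csSup_le_csSup (bdd S' f i) (nonempty_set hi)
  rintro m ⟨c, ⟨h1, h2, h3⟩, h4, h5⟩
  exact ⟨c, ⟨fun a ha => hSS (h1 a ha), h2, h3⟩, h4, h5⟩

lemma lvl_insert_le {S : Finset ℕ} {f : ℕ → ℝ} {x i : ℕ} (hx : x ∉ S) (hi : i ∈ S) :
    lvl (insert x S) f i ≤ lvl S f i + 1 := by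
  classical
  obtain ⟨c, hc, hlast, hlen⟩ := lvl_mem (f := f) (Finset.mem_insert_of_mem hi : i ∈ insert x S)
  have hne : i ≠ x := fun h => hx (h ▸ hi)
  have hnd := nodup_of_incr hc
  -- c.erase x is an increasing subsequence of S ending at i
  have hsub : (c.erase x).Sublist c := List.erase_sublist
  have hmem : ∀ a ∈ c.erase x, a ∈ S := by
    intro a ha
    rcases (List.Nodup.mem_erase_iff hnd).mp ha with ⟨hax, hac⟩
    rcases Finset.mem_insert.mp (hc.1 a hac) with h | h
    · exact absurd h hax
    · exact h
  have htransf : IsTrans ℕ (fun a b => f a < f b) := ⟨fun a b c h1 h2 => h1.trans h2⟩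
  have hincr : IsIncrSubseq S f (c.erase x) := by
    refine ⟨hmem, ?_, ?_⟩
    · exact List.isChain_iff_pairwise.mpr ((List.isChain_iff_pairwise.mp hc.2.1).sublist hsub)
    · exact List.isChain_iff_pairwise.mpr ((List.isChain_iff_pairwise.mp hc.2.2).sublist hsub)
  -- last of c.erase x is i
  have hcne : c ≠ [] := by rintro rfl; simp at hlast
  have hi' : c.getLast hcne = i := by
    rw [List.getLast?_eq_getLast hcne] at hlast
    exact Option.some.inj hlast
  have hdrop : c.dropLast ++ [i] = c := by rw [← hi']; exact List.dropLast_append_getLast hcne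
  have hlast' : (c.erase x).getLast? = some i := by
    by_cases hxc : x ∈ c.dropLast
    · rw [← hdrop, List.erase_append_left _ hxc, List.getLast?_concat]
    · rw [← hdrop, List.erase_append_right _ hxc]
      have : ([i].erase x) = [i] := List.erase_of_not_mem (by simp [Ne.symm hne])
      rw [this, List.getLast?_concat]
  have hlen' : c.length - 1 ≤ (c.erase x).length := by
    rw [List.length_erase]
    split <;> omega
  have h1 : (c.erase x).length ≤ lvl S f i :=
    le_csSup (bdd S f i) ⟨c.erase x, hincr, hlast', rfl⟩
  omega

end Aux

/-- For every natural number `k`, the post-insertion level set satisfies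
`L'_{k+1} = (L_{k+1} \ T_{k+1}) ∪ T_k`. -/
theorem stmt_5 (S : Finset ℕ) (f : ℕ → ℝ) (x : ℕ) (hx : x ∉ S) (k : ℕ) :
    levelSet (insert x S) f (k + 1) =
      (levelSet S f (k + 1) \ promoted S f x (k + 1)) ∪ promoted S f x k := by
  ext i
  simp only [levelSet, promoted, Set.mem_union, Set.mem_diff, Set.mem_setOf_eq]
  constructor
  · rintro ⟨hiS', hlvl'⟩
    rcases Finset.mem_insert.mp hiS' with rfl | hiS
    · exact Or.inr ⟨hiS', hlvl', Or.inl rfl⟩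
    · have h1 : lvl S f i ≤ lvl (insert x S) f i :=
        Aux.lvl_mono (Finset.subset_insert x S) hiS
      have h2 : lvl (insert x S) f i ≤ lvl S f i + 1 := Aux.lvl_insert_le hx hiS
      have : lvl S f i = k ∨ lvl S f i = k + 1 := by omega
      rcases this with h | h
      · exact Or.inr ⟨hiS', hlvl', Or.inr h⟩
      · refine Or.inl ⟨⟨hiS, h⟩, ?_⟩
        rintro ⟨-, habs, -⟩
        omega
  · rintro (⟨⟨hiS, hlvl⟩, hnT⟩ | ⟨hiS', hlvl', -⟩)
    · have hiS' : i ∈ insert x S := Finset.mem_insert_of_mem hiS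
      have h1 : lvl S f i ≤ lvl (insert x S) f i :=
        Aux.lvl_mono (Finset.subset_insert x S) hiS
      have h2 : lvl (insert x S) f i ≤ lvl S f i + 1 := Aux.lvl_insert_le hx hiS
      refine ⟨hiS', ?_⟩
      have : lvl (insert x S) f i ≠ k + 2 := fun h => hnT ⟨hiS', by omega, Or.inr hlvl⟩
      omega
    · exact ⟨hiS', hlvl'⟩
end

section
/- Suppose T_k is nonempty. Then T_{k+1} consists exactly of the indices i ∈ L_{k+1} satisfying both min(T_k) < i and f(i) > f(max(T_k)). -/
namespace StmtAux

def IRel (f : ℕ → ℝ) (a b : ℕ) : Prop := a < b ∧ f a < f b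

instance (f : ℕ → ℝ) : IsTrans ℕ (IRel f) :=
  ⟨fun _ _ _ h1 h2 => ⟨h1.1.trans h2.1, h1.2.trans h2.2⟩⟩

variable {S : Finset ℕ} {f : ℕ → ℝ}

lemma chain'_irel_iff {c : List ℕ} :
    c.Chain' (IRel f) ↔ c.Chain' (· < ·) ∧ c.Chain' (fun a b => f a < f b) := by
  induction c with
  | nil => simp [List.Chain']
  | cons a l ih =>
    cases l with
    | nil => simp [List.Chain']
    | cons b m =>
      simp only [List.Chain', List.isChain_cons_cons] at *
      rw [ih]
      unfold IRel
      tauto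

lemma isIncr_iff {c : List ℕ} :
    IsIncrSubseq S f c ↔ (∀ a ∈ c, a ∈ S) ∧ c.Chain' (IRel f) := by
  rw [IsIncrSubseq, chain'_irel_iff]

lemma isIncr_pairwise {c : List ℕ} :
    IsIncrSubseq S f c ↔ (∀ a ∈ c, a ∈ S) ∧ c.Pairwise (IRel f) := by
  simp only [isIncr_iff, List.Chain', List.isChain_iff_pairwise]

lemma lvl_eq (S : Finset ℕ) (f : ℕ → ℝ) (i : ℕ) :
    lvl S f i = sSup {m | ∃ c : List ℕ, IsIncrSubseq S f c ∧ c.getLast? = some i ∧ c.length = m} :=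
  rfl

lemma length_le_card {c : List ℕ} (h : IsIncrSubseq S f c) : c.length ≤ S.card := by
  obtain ⟨hmem, hp⟩ := isIncr_pairwise.1 h
  have hnd : c.Nodup := hp.imp (fun h => Nat.ne_of_lt h.1)
  calc c.length = c.toFinset.card := (List.toFinset_card_of_nodup hnd).symm
    _ ≤ S.card := Finset.card_le_card (fun a ha => hmem a (List.mem_toFinset.1 ha))

lemma bddAbove_lenSet (S : Finset ℕ) (f : ℕ → ℝ) (i : ℕ) :
    BddAbove {m | ∃ c : List ℕ, IsIncrSubseq S f c ∧ c.getLast? = some i ∧ c.length = m} := by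
  refine ⟨S.card, ?_⟩
  rintro m ⟨c, hc, -, rfl⟩
  exact length_le_card hc

lemma le_lvl {c : List ℕ} {i : ℕ} (hc : IsIncrSubseq S f c) (hl : c.getLast? = some i) :
    c.length ≤ lvl S f i :=
  le_csSup (bddAbove_lenSet S f i) ⟨c, hc, hl, rfl⟩

lemma lvl_le {i B : ℕ}
    (h : ∀ c : List ℕ, IsIncrSubseq S f c → c.getLast? = some i → c.length ≤ B) :
    lvl S f i ≤ B := by
  rw [lvl_eq]
  rcases Set.eq_empty_or_nonempty
      {m | ∃ c : List ℕ, IsIncrSubseq S f c ∧ c.getLast? = some i ∧ c.length = m} with he | hne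
  · rw [he, csSup_empty]
    exact bot_le
  · refine csSup_le hne ?_
    rintro m ⟨c, hc, hcl, rfl⟩
    exact h c hc hcl

lemma isIncr_singleton {i : ℕ} (hi : i ∈ S) : IsIncrSubseq S f [i] := by
  rw [isIncr_iff]
  exact ⟨by simpa using hi, List.isChain_singleton i⟩

lemma one_le_lvl {i : ℕ} (hi : i ∈ S) : 1 ≤ lvl S f i :=
  le_lvl (isIncr_singleton hi) rfl

lemma exists_maxchain {i : ℕ} (hi : i ∈ S) :
    ∃ c : List ℕ, IsIncrSubseq S f c ∧ c.getLast? = some i ∧ c.length = lvl S f i := by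
  have hne : {m | ∃ c : List ℕ, IsIncrSubseq S f c ∧ c.getLast? = some i ∧ c.length = m}.Nonempty :=
    ⟨1, [i], isIncr_singleton hi, rfl, rfl⟩
  exact Nat.sSup_mem hne (bddAbove_lenSet S f i)

lemma getLast?_decomp : ∀ {c : List ℕ} {i : ℕ}, c.getLast? = some i → ∃ c', c = c' ++ [i] := by
  intro c
  induction c with
  | nil => intro i h; simp at h
  | cons a l ih =>
    intro i h
    cases l with
    | nil =>
      simp [List.getLast?] at h
      exact ⟨[], by simp [h]⟩
    | cons b m =>
      rw [List.getLast?_cons_cons] at h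
      obtain ⟨c', hc'⟩ := ih h
      exact ⟨a :: c', by simp [hc']⟩

lemma getLast?_append_right {l₁ l₂ : List ℕ} {a : ℕ} (h : l₂.getLast? = some a) :
    (l₁ ++ l₂).getLast? = some a := by
  obtain ⟨l', rfl⟩ := getLast?_decomp h
  rw [← List.append_assoc]
  exact List.getLast?_concat

lemma lvl_eq_zero {i : ℕ} (hi : i ∉ S) : lvl S f i = 0 := by
  refine Nat.le_zero.1 (lvl_le ?_)
  intro c hc hcl
  obtain ⟨c', rfl⟩ := getLast?_decomp hcl
  exact absurd (hc.1 i (by simp)) hi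

lemma mem_of_lvl_pos {i : ℕ} (h : 0 < lvl S f i) : i ∈ S := by
  by_contra hi
  rw [lvl_eq_zero hi] at h
  omega

lemma lvl_lt_of_rel {i j : ℕ} (hi : i ∈ S) (h : IRel f j i) : lvl S f j < lvl S f i := by
  by_cases hj : j ∈ S
  · obtain ⟨c, hc, hcl, hlen⟩ := exists_maxchain hj
    have hc' : IsIncrSubseq S f (c ++ [i]) := by
      rw [isIncr_iff] at hc ⊢
      refine ⟨?_, List.isChain_append.2 ⟨hc.2, List.isChain_singleton i, ?_⟩⟩
      · intro a ha
        rcases List.mem_append.1 ha with h1 | h1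
        · exact hc.1 a h1
        · simp at h1; subst h1; exact hi
      · intro p hp q hq
        rw [hcl] at hp
        simp at hp hq
        subst hp; subst hq; exact h
    have hle := le_lvl hc' (List.getLast?_concat)
    simp at hle
    omega
  · have h0 : lvl S f j = 0 := lvl_eq_zero hj
    have h1 := one_le_lvl (f := f) hi
    omega

lemma lvl_mono {T : Finset ℕ} (hST : S ⊆ T) (i : ℕ) : lvl S f i ≤ lvl T f i := by
  apply lvl_le
  intro c hc hcl
  refine le_lvl (S := T) ?_ hcl
  rw [isIncr_iff] at hc ⊢
  exact ⟨fun a ha => hST (hc.1 a ha), hc.2⟩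

lemma lvl_insert_le {x i : ℕ} (hix : i ≠ x) :
    lvl (insert x S) f i ≤ lvl S f i + 1 := by
  apply lvl_le
  intro c hc hcl
  by_cases hxc : x ∈ c
  · obtain ⟨c₁, c₂, rfl⟩ := List.append_of_mem hxc
    rcases c₂.eq_nil_or_concat with rfl | ⟨d, j, rfl⟩
    · rw [show c₁ ++ [x] = c₁ ++ [x] from rfl, List.getLast?_concat] at hcl
      exact absurd (by simpa using hcl) hix.symm
    · have hj : j = i := by
        have : (c₁ ++ x :: d.concat j).getLast? = some j := by
          rw [List.concat_eq_append, show c₁ ++ x :: (d ++ [j]) = (c₁ ++ x :: d) ++ [j] by simp,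
            List.getLast?_concat]
        rw [this] at hcl
        simpa using hcl
      subst hj
      obtain ⟨hmem, hp⟩ := isIncr_pairwise.1 hc
      rw [List.concat_eq_append] at hmem hp ⊢
      have hp' := hp
      rw [List.pairwise_append] at hp'
      have hd : IsIncrSubseq S f (c₁ ++ (d ++ [j])) := by
        rw [isIncr_pairwise]
        constructor
        · intro a ha
          rcases List.mem_append.1 ha with h1 | h1
          · have hrel : IRel f a x := hp'.2.2 a h1 x (by simp)
            have haS := hmem a (by simp at h1 ⊢; tauto)
            rcases Finset.mem_insert.1 haS with h | h
            · exact absurd h (Nat.ne_of_lt hrel.1)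
            · exact h
          · have hrel : IRel f x a := by
              have := hp'.2.1
              rw [List.pairwise_cons] at this
              exact this.1 a h1
            have haS := hmem a (by simp at h1 ⊢; tauto)
            rcases Finset.mem_insert.1 haS with h | h
            · exact absurd h.symm (Nat.ne_of_lt hrel.1)
            · exact h
        · refine hp.sublist ?_
          exact (List.sublist_cons_self x (d ++ [j])).append_left c₁
      have hlast : (c₁ ++ (d ++ [j])).getLast? = some j :=
        getLast?_append_right (List.getLast?_concat)
      have := le_lvl hd hlast
      simp at this ⊢
      omega
  · have hc' : IsIncrSubseq S f c := by
      rw [isIncr_iff] at hc ⊢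
      refine ⟨?_, hc.2⟩
      intro a ha
      rcases Finset.mem_insert.1 (hc.1 a ha) with h | h
      · exact absurd (h ▸ ha) hxc
      · exact h
    have := le_lvl hc' hcl
    omega

lemma exists_pred {i m : ℕ} (hm : 1 ≤ m) (h : lvl S f i = m + 1) :
    ∃ v, v ∈ S ∧ IRel f v i ∧ lvl S f v = m := by
  have hi : i ∈ S := mem_of_lvl_pos (f := f) (by omega)
  obtain ⟨c, hc, hcl, hlen⟩ := exists_maxchain (f := f) hi
  obtain ⟨c', rfl⟩ := getLast?_decomp hcl
  have hc'len : c'.length = m := by simp at hlen; omega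
  have hc'ne : c' ≠ [] := by
    intro h0
    rw [h0] at hc'len
    simp at hc'len
    omega
  obtain ⟨d, v, rfl⟩ := c'.eq_nil_or_concat.resolve_left hc'ne
  obtain ⟨hmem, hp⟩ := isIncr_pairwise.1 hc
  have hvi : IRel f v i := by
    rw [List.pairwise_append] at hp
    exact hp.2.2 v (by simp) i (by simp)
  have hvS : v ∈ S := hmem v (by simp)
  have hc'chain : IsIncrSubseq S f (d.concat v) := by
    rw [isIncr_pairwise]
    refine ⟨fun a ha => hmem a (by simp at ha ⊢; tauto), ?_⟩
    exact hp.sublist (List.sublist_append_left _ _)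
  have h1 : m ≤ lvl S f v := by
    have := le_lvl hc'chain (by rw [List.concat_eq_append, List.getLast?_concat])
    omega
  have h2 : lvl S f v < m + 1 := h ▸ lvl_lt_of_rel hi hvi
  exact ⟨v, hvS, hvi, by omega⟩

lemma rel_getLast {c : List ℕ} {i a : ℕ} (hc : IsIncrSubseq S f c)
    (hcl : c.getLast? = some i) (ha : a ∈ c) (hne : a ≠ i) : IRel f a i := by
  obtain ⟨c', rfl⟩ := getLast?_decomp hcl
  obtain ⟨-, hp⟩ := isIncr_pairwise.1 hc
  rw [List.pairwise_append] at hp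
  rcases List.mem_append.1 ha with h1 | h1
  · exact hp.2.2 a h1 i (by simp)
  · simp at h1
    exact absurd h1 hne

def listOf (g : ℕ → ℕ) (lo n : ℕ) : List ℕ := (List.range (n + 1)).map (fun u => g (lo + u))

lemma listOf_length (g : ℕ → ℕ) (lo n : ℕ) : (listOf g lo n).length = n + 1 := by
  simp [listOf]

lemma listOf_succ (g : ℕ → ℕ) (lo n : ℕ) :
    listOf g lo (n + 1) = listOf g lo n ++ [g (lo + (n + 1))] := by
  simp [listOf, List.range_succ]

lemma listOf_getLast? (g : ℕ → ℕ) (lo n : ℕ) :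
    (listOf g lo n).getLast? = some (g (lo + n)) := by
  cases n with
  | zero => simp [listOf, List.range_succ]
  | succ n => rw [listOf_succ, List.getLast?_concat]

lemma listOf_head? (g : ℕ → ℕ) (lo n : ℕ) : (listOf g lo n).head? = some (g lo) := by
  rw [listOf, List.range_succ_eq_map]
  simp

lemma listOf_mem {g : ℕ → ℕ} {lo n a : ℕ} (h : a ∈ listOf g lo n) :
    ∃ u, u ≤ n ∧ a = g (lo + u) := by
  rw [listOf] at h
  simp at h
  obtain ⟨u, hu, rfl⟩ := h
  exact ⟨u, by omega, rfl⟩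

lemma listOf_chain' {g : ℕ → ℕ} {lo n : ℕ}
    (h : ∀ s, lo ≤ s → s < lo + n → IRel f (g s) (g (s + 1))) :
    (listOf g lo n).Chain' (IRel f) := by
  induction n with
  | zero => simp [listOf, List.range_succ, List.Chain']
  | succ n ih =>
    rw [listOf_succ]
    refine List.isChain_append.2 ⟨ih (fun s h1 h2 => h s h1 (by omega)), List.isChain_singleton _, ?_⟩
    intro p hp q hq
    rw [listOf_getLast?] at hp
    simp at hp hq
    subst hp; subst hq
    have := h (lo + n) (by omega) (by omega)
    have he : lo + (n + 1) = (lo + n) + 1 := by omega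
    rw [he]
    exact this

lemma exists_flip (P : ℕ → Prop) {r K : ℕ} (hrK : r ≤ K) (h1 : P r) (h2 : ¬ P K) :
    ∃ t, r ≤ t ∧ t < K ∧ P t ∧ ¬ P (t + 1) := by
  by_contra hc
  push_neg at hc
  apply h2
  have key : ∀ m, r ≤ m → m ≤ K → P m := by
    intro m
    induction m with
    | zero =>
      intro ha _
      have : r = 0 := by omega
      exact this ▸ h1
    | succ m ihm =>
      intro ha hb
      rcases Nat.lt_or_ge r (m + 1) with h | h
      · exact hc m (by omega) (by omega) (ihm (by omega) (by omega))
      · have : r = m + 1 := by omega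
        exact this ▸ h1
  exact key K hrK le_rfl

variable {x : ℕ}

lemma mem_S_of_promoted {w k : ℕ} (hw : w ∈ promoted S f x k) (hwx : w ≠ x) :
    w ∈ S ∧ lvl S f w = k ∧ lvl (insert x S) f w = k + 1 := by
  obtain ⟨h1, h2, h3⟩ := hw
  exact ⟨(Finset.mem_insert.1 h1).resolve_left hwx, h3.resolve_left hwx, h2⟩

lemma rel_x (hx : x ∉ S) {w k : ℕ} (hw : w ∈ promoted S f x k) (hwx : w ≠ x) :
    IRel f x w := by
  obtain ⟨hwS, hlw, hl'w⟩ := mem_S_of_promoted hw hwx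
  obtain ⟨c, hc, hclast, hlen⟩ := exists_maxchain (S := insert x S) (f := f)
    (Finset.mem_insert_of_mem hwS)
  have hxc : x ∈ c := by
    by_contra hxc
    have hc' : IsIncrSubseq S f c := by
      rw [isIncr_iff] at hc ⊢
      refine ⟨?_, hc.2⟩
      intro p hp
      rcases Finset.mem_insert.1 (hc.1 p hp) with h | h
      · exact absurd (h ▸ hp) hxc
      · exact h
    have := le_lvl hc' hclast
    omega
  exact rel_getLast hc hclast hxc (fun h => hwx h.symm)

lemma promote_step (hx : x ∉ S) {t w k : ℕ} (ht : t ∈ promoted S f x k)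
    (hrel : IRel f t w) (hw : lvl S f w = k + 1) : w ∈ promoted S f x (k + 1) := by
  have hwS : w ∈ S := mem_of_lvl_pos (f := f) (by omega)
  have hwx : w ≠ x := fun h => hx (h ▸ hwS)
  have h1 : lvl (insert x S) f t = k + 1 := ht.2.1
  have h2 := lvl_lt_of_rel (S := insert x S) (Finset.mem_insert_of_mem hwS) hrel
  have h3 : lvl (insert x S) f w ≤ lvl S f w + 1 := lvl_insert_le hwx
  exact ⟨Finset.mem_insert_of_mem hwS, by omega, Or.inr hw⟩

lemma promoted_pred (hx : x ∉ S) {w k : ℕ} (hw : w ∈ promoted S f x (k + 1)) (hwx : w ≠ x) :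
    ∃ t ∈ promoted S f x k, IRel f t w := by
  obtain ⟨hwS, hlw, hl'w⟩ := mem_S_of_promoted hw hwx
  obtain ⟨v, hvS', hrel, hlv⟩ := exists_pred (S := insert x S) (m := k + 1) (by omega) hl'w
  by_cases hvx : v = x
  · subst hvx
    exact ⟨v, ⟨Finset.mem_insert_self v S, hlv, Or.inl rfl⟩, hrel⟩
  · have hvS : v ∈ S := (Finset.mem_insert.1 hvS').resolve_left hvx
    have h1 : lvl S f v < k + 1 := hlw ▸ lvl_lt_of_rel hwS hrel
    have h2 : lvl (insert x S) f v ≤ lvl S f v + 1 := lvl_insert_le hvx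
    have h3 : lvl S f v ≤ lvl (insert x S) f v := lvl_mono (Finset.subset_insert x S) v
    exact ⟨v, ⟨hvS', hlv, Or.inr (by omega)⟩, hrel⟩

lemma lvl'_x_le (hx : x ∉ S) {w k : ℕ} (hw : w ∈ promoted S f x k) (hwx : w ≠ x) :
    lvl (insert x S) f x ≤ k := by
  have h1 := lvl_lt_of_rel (S := insert x S) hw.1 (rel_x hx hw hwx)
  have h2 : lvl (insert x S) f w = k + 1 := hw.2.1
  omega

lemma promoted_anti {p q k : ℕ} (hp : p ∈ promoted S f x k) (hq : q ∈ promoted S f x k)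
    (hpq : p < q) : f q ≤ f p := by
  by_contra h
  push_neg at h
  have := lvl_lt_of_rel (S := insert x S) hq.1 ⟨hpq, h⟩
  rw [hp.2.1, hq.2.1] at this
  omega

lemma seq_down_aux (hx : x ∉ S) :
    ∀ n k w, k = (lvl (insert x S) f x - 1) + n → w ∈ promoted S f x k →
    ∃ e : ℕ → ℕ, e (k + 1) = w ∧
      (∀ s, lvl (insert x S) f x ≤ s → s ≤ k → IRel f (e s) (e (s + 1))) ∧
      (∀ s, lvl (insert x S) f x ≤ s → s ≤ k + 1 → e s ∈ promoted S f x (s - 1)) ∧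
      e (lvl (insert x S) f x) = x := by
  have hr1 : 1 ≤ lvl (insert x S) f x := one_le_lvl (Finset.mem_insert_self x S)
  intro n
  induction n with
  | zero =>
    intro k w hk hw
    have hwx : w = x := by
      by_contra hne
      have := lvl'_x_le hx hw hne
      omega
    have hkr : k + 1 = lvl (insert x S) f x := by
      have h := hw.2.1
      rw [hwx] at h
      omega
    refine ⟨fun _ => w, rfl, ?_, ?_, hwx⟩
    · intro s hs1 hs2
      exact absurd hs2 (by omega)
    · intro s hs1 hs2
      have hs : s = lvl (insert x S) f x := by omega
      have h21 := hw.2.1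
      refine ⟨hw.1, ?_, Or.inl hwx⟩
      show lvl (insert x S) f w = s - 1 + 1
      omega
  | succ n ih =>
    intro k w hk hw
    have hk1 : 1 ≤ k := by omega
    have hwx : w ≠ x := by
      rintro rfl
      have := hw.2.1
      omega
    obtain ⟨t, ht, hrel⟩ : ∃ t ∈ promoted S f x (k - 1), IRel f t w := by
      have hw' : w ∈ promoted S f x ((k - 1) + 1) := by
        rwa [show k - 1 + 1 = k by omega]
      exact promoted_pred hx hw' hwx
    obtain ⟨e', he'top, he'rel, he'mem, he'r⟩ := ih (k - 1) t (by omega) ht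
    refine ⟨fun s => if s = k + 1 then w else e' s, by simp, ?_, ?_, ?_⟩
    · intro s hs1 hs2
      by_cases hsk : s = k
      · have hn1 : s ≠ k + 1 := by omega
        have hn2 : s + 1 = k + 1 := by omega
        simp only [if_neg hn1, hn2, if_pos rfl]
        have he : e' s = t := by
          rw [show s = (k - 1) + 1 by omega]
          exact he'top
        rw [he]
        exact hrel
      · simp only [if_neg (show s ≠ k + 1 by omega), if_neg (show s + 1 ≠ k + 1 by omega)]
        exact he'rel s hs1 (by omega)
    · intro s hs1 hs2
      by_cases hsk : s = k + 1
      · simp only [if_pos hsk]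
        rwa [show s - 1 = k by omega]
      · simp only [if_neg hsk]
        exact he'mem s hs1 (by omega)
    · simp only [if_neg (show lvl (insert x S) f x ≠ k + 1 by omega)]
      exact he'r

lemma seq_down (hx : x ∉ S) {k w : ℕ} (hw : w ∈ promoted S f x k) :
    ∃ e : ℕ → ℕ, e (k + 1) = w ∧
      (∀ s, lvl (insert x S) f x ≤ s → s ≤ k → IRel f (e s) (e (s + 1))) ∧
      (∀ s, lvl (insert x S) f x ≤ s → s ≤ k + 1 → e s ∈ promoted S f x (s - 1)) ∧
      e (lvl (insert x S) f x) = x := by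
  have hr1 : 1 ≤ lvl (insert x S) f x := one_le_lvl (Finset.mem_insert_self x S)
  have hn : ∃ n, k = (lvl (insert x S) f x - 1) + n := by
    by_cases hwx : w = x
    · subst hwx
      have := hw.2.1
      exact ⟨0, by omega⟩
    · have := lvl'_x_le hx hw hwx
      exact ⟨k - (lvl (insert x S) f x - 1), by omega⟩
  obtain ⟨n, hn⟩ := hn
  exact seq_down_aux hx n k w hn hw

lemma seq_up (hx : x ∉ S) :
    ∀ K i, i ∈ S → lvl S f i = K → lvl (insert x S) f i = K →
    ∃ c : ℕ → ℕ, c K = i ∧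
      (∀ s, 1 ≤ s → s ≤ K → c s ∈ S ∧ lvl S f (c s) = s ∧ lvl (insert x S) f (c s) = s) ∧
      (∀ s, 1 ≤ s → s < K → IRel f (c s) (c (s + 1))) := by
  intro K
  induction K with
  | zero =>
    intro i hi h1 h2
    exact ⟨fun _ => i, rfl, fun s hs1 hs2 => absurd hs2 (by omega),
      fun s hs1 hs2 => absurd hs2 (by omega)⟩
  | succ K ih =>
    intro i hi h1 h2
    by_cases hK : K = 0
    · subst hK
      refine ⟨fun _ => i, rfl, ?_, fun s hs1 hs2 => absurd hs2 (by omega)⟩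
      intro s hs1 hs2
      have : s = 1 := by omega
      subst this
      exact ⟨hi, h1, h2⟩
    · have hK1 : 1 ≤ K := by omega
      obtain ⟨v, hvS, hrel, hlv⟩ := exists_pred (m := K) hK1 h1
      have hlv' : lvl (insert x S) f v = K := by
        have hle : lvl S f v ≤ lvl (insert x S) f v := lvl_mono (Finset.subset_insert x S) v
        have hlt := lvl_lt_of_rel (S := insert x S) (Finset.mem_insert_of_mem hi) hrel
        omega
      obtain ⟨c', hc'top, hc'mem, hc'rel⟩ := ih v hvS hlv hlv'
      refine ⟨fun s => if s = K + 1 then i else c' s, by simp, ?_, ?_⟩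
      · intro s hs1 hs2
        by_cases hsK : s = K + 1
        · subst hsK
          simp only [if_pos rfl]
          exact ⟨hi, h1, h2⟩
        · simp only [if_neg hsK]
          exact hc'mem s hs1 (by omega)
      · intro s hs1 hs2
        by_cases hsK : s = K
        · subst hsK
          simp only [if_neg (show s ≠ s + 1 by omega), if_pos rfl]
          rw [hc'top]
          exact hrel
        · simp only [if_neg (show s ≠ K + 1 by omega), if_neg (show s + 1 ≠ K + 1 by omega)]
          exact hc'rel s hs1 (by omega)

lemma splice_contra {k t ct : ℕ} {e : ℕ → ℕ}
    (hctS : ct ∈ S) (hlct : lvl S f ct = t)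
    (hjunc : IRel f ct (e (t + 1)))
    (herel : ∀ s, t + 1 ≤ s → s ≤ k → IRel f (e s) (e (s + 1)))
    (hemem : ∀ s, t + 1 ≤ s → s ≤ k + 1 → e s ∈ S)
    (htk : t ≤ k) :
    k + 1 ≤ lvl S f (e (k + 1)) := by
  obtain ⟨W, hW, hWlast, hWlen⟩ := exists_maxchain (f := f) hctS
  have hart : t + 1 + (k - t) = k + 1 := by omega
  have hchain : IsIncrSubseq S f (W ++ listOf e (t + 1) (k - t)) := by
    rw [isIncr_iff]
    constructor
    · intro p hp
      rcases List.mem_append.1 hp with h1 | h1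
      · exact hW.1 p h1
      · obtain ⟨u, hu, rfl⟩ := listOf_mem h1
        exact hemem (t + 1 + u) (by omega) (by omega)
    · refine List.isChain_append.2 ⟨(isIncr_iff.1 hW).2, ?_, ?_⟩
      · exact listOf_chain' (fun s h1 h2 => herel s h1 (by omega))
      · intro p hp q hq
        rw [hWlast] at hp
        rw [listOf_head?] at hq
        simp at hp hq
        subst hp
        subst hq
        exact hjunc
  have hlast : (W ++ listOf e (t + 1) (k - t)).getLast? = some (e (k + 1)) := by
    refine getLast?_append_right ?_
    rw [listOf_getLast?, hart]
  have hlen : (W ++ listOf e (t + 1) (k - t)).length = k + 1 := by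
    rw [List.length_append, hWlen, hlct, listOf_length]
    omega
  have := le_lvl hchain hlast
  omega

end StmtAux

open StmtAux in
/-- If `T_k` is nonempty, then `T_{k+1}` consists exactly of the indices `i ∈ L_{k+1}`
with `min (T_k) < i` and `f i > f (max (T_k))`. -/
theorem stmt_7 (S : Finset ℕ) (f : ℕ → ℝ) (x : ℕ) (hx : x ∉ S) (k : ℕ)
    (hT : (promoted S f x k).Nonempty) :
    promoted S f x (k + 1) =
      {i | i ∈ levelSet S f (k + 1) ∧ sInf (promoted S f x k) < i ∧
        f (sSup (promoted S f x k)) < f i} := by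
  have hr1 : 1 ≤ lvl (insert x S) f x := one_le_lvl (Finset.mem_insert_self x S)
  have hbdd : BddAbove (promoted S f x k) :=
    Set.Finite.bddAbove (Set.Finite.subset (insert x S).finite_toSet (fun p hp => hp.1))
  have haM : sInf (promoted S f x k) ∈ promoted S f x k := Nat.sInf_mem hT
  have hbM : sSup (promoted S f x k) ∈ promoted S f x k := Nat.sSup_mem hT hbdd
  set a := sInf (promoted S f x k) with ha
  set b := sSup (promoted S f x k) with hb
  clear_value a b
  ext i
  simp only [Set.mem_setOf_eq]
  constructor
  · intro hi
    have hix : i ≠ x := by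
      rintro rfl
      rcases eq_or_ne b i with hbx | hbx
      · rw [hbx] at hbM
        have h1 := hbM.2.1
        have h2 := hi.2.1
        omega
      · have h1 := lvl'_x_le hx hbM hbx
        have h2 := hi.2.1
        omega
    obtain ⟨hiS, hli, hl'i⟩ := mem_S_of_promoted hi hix
    obtain ⟨t, ht, hrel⟩ := promoted_pred hx hi hix
    refine ⟨⟨hiS, hli⟩, ?_, ?_⟩
    · have hh := Nat.sInf_le ht
      rw [← ha] at hh
      exact lt_of_le_of_lt hh hrel.1
    · rcases eq_or_ne t b with rfl | htb
      · exact hrel.2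
      · have hh := le_csSup hbdd ht
        rw [← hb] at hh
        have htle : t < b := lt_of_le_of_ne hh htb
        exact lt_of_le_of_lt (promoted_anti ht hbM htle) hrel.2
  · rintro ⟨⟨hiS, hli⟩, hai, hfb⟩
    rcases lt_trichotomy b i with hbi | hbi | hbi
    · exact promote_step hx hbM ⟨hbi, hfb⟩ hli
    · exfalso
      rcases hbM.2.2 with hbx | hlb
      · rw [← hbi, hbx] at hiS
        exact hx hiS
      · rw [hbi] at hlb
        omega
    · by_contra hni
      have hl'ge : k + 1 ≤ lvl (insert x S) f i := hli ▸ lvl_mono (Finset.subset_insert x S) i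
      have hixx : i ≠ x := fun h => hx (h ▸ hiS)
      have hl'le : lvl (insert x S) f i ≤ k + 2 := by
        have := lvl_insert_le (S := S) (f := f) hixx
        omega
      have hl'i : lvl (insert x S) f i = k + 1 := by
        rcases Nat.lt_or_ge (lvl (insert x S) f i) (k + 2) with h | h
        · omega
        · exact absurd ⟨Finset.mem_insert_of_mem hiS, by omega, Or.inr hli⟩ hni
      have hbx : b ≠ x := by
        rintro rfl
        have hab : a ≠ b := by omega
        have := (rel_x hx haM hab).1
        omega
      obtain ⟨hbS, hlb, hl'b⟩ := mem_S_of_promoted hbM hbx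
      have hrk : lvl (insert x S) f x ≤ k := lvl'_x_le hx hbM hbx
      have hax : a ≠ x := by
        rintro rfl
        have := haM.2.1
        omega
      obtain ⟨haS, hla, hl'a⟩ := mem_S_of_promoted haM hax
      obtain ⟨c, hctop, hcmem, hcrel⟩ := seq_up hx (k + 1) i hiS hli hl'i
      have hcr := hcmem (lvl (insert x S) f x) hr1 (by omega)
      have hcrx : c (lvl (insert x S) f x) ≠ x := fun h => hx (h ▸ hcr.1)
      rcases lt_or_gt_of_ne hcrx with hcx | hcx
      · -- c r < x : use the chain from a
        obtain ⟨e, hetop, herel0, hemem0, her⟩ := seq_down hx haM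
        obtain ⟨t, hrt, htk0, hPt0, hPn0⟩ := exists_flip (fun s => c s < e s)
          (show lvl (insert x S) f x ≤ k + 1 by omega)
          (show c (lvl (insert x S) f x) < e (lvl (insert x S) f x) by rw [her]; exact hcx)
          (show ¬ (c (k + 1) < e (k + 1)) by rw [hctop, hetop]; omega)
        have htk : t ≤ k := by omega
        have hPt : c t < e t := hPt0
        have hPn : ¬ (c (t + 1) < e (t + 1)) := hPn0
        have hct := hcmem t (by omega) (by omega)
        have hct1 := hcmem (t + 1) (by omega) (by omega)
        have he1 : e (t + 1) ∈ promoted S f x t := by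
          have := hemem0 (t + 1) (by omega) (by omega)
          simpa using this
        have hex : e (t + 1) ≠ x := by
          intro hxe
          have h21 := he1.2.1
          rw [hxe] at h21
          omega
        obtain ⟨heS, hle, hl'e⟩ := mem_S_of_promoted he1 hex
        have hne : e (t + 1) ≠ c (t + 1) := by
          intro h
          rw [h] at hle
          have := hct1.2.1
          omega
        have hlt : e (t + 1) < c (t + 1) := by omega
        have hfle : f (c (t + 1)) ≤ f (e (t + 1)) := by
          by_contra h
          push_neg at h
          have := lvl_lt_of_rel (S := insert x S) (Finset.mem_insert_of_mem hct1.1) ⟨hlt, h⟩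
          rw [hl'e, hct1.2.2] at this
          omega
        have hjunc : IRel f (c t) (e (t + 1)) := by
          constructor
          · have h1 := (herel0 t hrt htk).1
            omega
          · exact lt_of_lt_of_le (hcrel t (by omega) (by omega)).2 hfle
        have hfin := splice_contra hct.1 hct.2.1 hjunc
          (fun s h1 h2 => herel0 s (by omega) h2)
          (fun s h1 h2 => by
            have hm := hemem0 s (by omega) (by omega)
            have hmx : e s ≠ x := by
              intro hxe
              have h21 := hm.2.1
              rw [hxe] at h21
              omega
            exact (Finset.mem_insert.1 hm.1).resolve_left hmx)
          htk
        rw [hetop] at hfin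
        omega
      · -- x < c r : use the chain from b
        obtain ⟨e, hetop, herel0, hemem0, her⟩ := seq_down hx hbM
        obtain ⟨t, hrt, htk0, hPt0, hPn0⟩ := exists_flip (fun s => e s < c s)
          (show lvl (insert x S) f x ≤ k + 1 by omega)
          (show e (lvl (insert x S) f x) < c (lvl (insert x S) f x) by rw [her]; exact hcx)
          (show ¬ (e (k + 1) < c (k + 1)) by rw [hctop, hetop]; omega)
        have htk : t ≤ k := by omega
        have hPt : e t < c t := hPt0
        have hPn : ¬ (e (t + 1) < c (t + 1)) := hPn0
        have hct := hcmem t (by omega) (by omega)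
        have hct1 := hcmem (t + 1) (by omega) (by omega)
        have hmt := hemem0 t (by omega) (by omega)
        have he1 : e (t + 1) ∈ promoted S f x t := by
          have := hemem0 (t + 1) (by omega) (by omega)
          simpa using this
        have hex : e (t + 1) ≠ x := by
          intro hxe
          have h21 := he1.2.1
          rw [hxe] at h21
          omega
        obtain ⟨heS, hle, hl'e⟩ := mem_S_of_promoted he1 hex
        have hne : e (t + 1) ≠ c (t + 1) := by
          intro h
          rw [h] at hle
          have := hct1.2.1
          omega
        have hlt : c (t + 1) < e (t + 1) := by omega
        have hflet : f (c t) ≤ f (e t) := by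
          by_contra h
          push_neg at h
          have := lvl_lt_of_rel (S := insert x S) (Finset.mem_insert_of_mem hct.1) ⟨hPt, h⟩
          have h21 := hmt.2.1
          rw [hct.2.2] at this
          omega
        have hjunc : IRel f (c t) (e (t + 1)) := by
          constructor
          · have h1 := (hcrel t (by omega) (by omega)).1
            omega
          · exact lt_of_le_of_lt hflet (herel0 t hrt htk).2
        have hfin := splice_contra hct.1 hct.2.1 hjunc
          (fun s h1 h2 => herel0 s (by omega) h2)
          (fun s h1 h2 => by
            have hm := hemem0 s (by omega) (by omega)
            have hmx : e s ≠ x := by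
              intro hxe
              have h21 := hm.2.1
              rw [hxe] at h21
              omega
            exact (Finset.mem_insert.1 hm.1).resolve_left hmx)
          htk
        rw [hetop] at hfin
        omega
end
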